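/- For q ≥ 6 and n ≥ 3, the sum Σ_i [binom(i−1, 2)·binom(i+2, q) + (i−2)·binom(i+1, q) + binom(i, q)]·binom(n, i) (sum over i from q−2 to n, with appropriate range conventions) equals binom(q+2, 2)·binom(n, q+2)·2^(n−q−2) + 4·binom(q+1, 2)·binom(n, q+1)·2^(n−q−1) + q(3q−4)·binom(n, q)·2^(n−q) + 2(q−1)(q−3)·binom(n, q−1)·2^(n−q+1) + binom(q−3, 2)·binom(n, q−2)·2^(n−q+2). -/

import Mathlib

private lemma two_mul_choose_two (m : ℕ) : (m + 1).choose 2 * 2 = (m + 1) * m := by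
  induction m with
  | zero => rfl
  | succ n ih =>
    rw [Nat.choose_succ_succ (n + 1) 1, Nat.add_mul, ih, Nat.choose_one_right]
    ring

private lemma choose_two_eq (a b : ℕ) (h : a = b + 1) : a.choose 2 * 2 = a * b := by
  subst h; exact two_mul_choose_two b

private lemma key_sum (n m t : ℕ) (ht : t ≤ m) :
    ∑ i ∈ Finset.Icc t n, i.choose m * n.choose i = n.choose m * 2 ^ (n - m) := by
  rcases le_or_gt m n with h | h
  · have h1 : ∑ i ∈ Finset.Icc t n, i.choose m * n.choose i
        = ∑ i ∈ Finset.Icc m n, i.choose m * n.choose i := by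
      refine (Finset.sum_subset ?_ ?_).symm
      · intro x hx
        simp only [Finset.mem_Icc] at hx ⊢
        omega
      · intro x hx hx'
        simp only [Finset.mem_Icc] at hx hx'
        rw [Nat.choose_eq_zero_of_lt (by omega), Nat.zero_mul]
    rw [h1, ← Finset.Ico_add_one_right_eq_Icc, Finset.sum_Ico_eq_sum_range]
    have h2 : ∀ j ∈ Finset.range (n + 1 - m),
        (m + j).choose m * n.choose (m + j) = n.choose m * (n - m).choose j := by
      intro j hj
      simp only [Finset.mem_range] at hj
      have hmn : m + j ≤ n := by omega
      have := Nat.choose_mul (k := m + j) (n := n) (s := m) (by omega)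
      rw [Nat.mul_comm ((m + j).choose m), this, Nat.add_sub_cancel_left]
    rw [Finset.sum_congr rfl h2, ← Finset.mul_sum,
      show n + 1 - m = (n - m) + 1 by omega, Nat.sum_range_choose]
  · rw [Nat.choose_eq_zero_of_lt h, Nat.zero_mul]
    refine Finset.sum_eq_zero fun x hx => ?_
    simp only [Finset.mem_Icc] at hx
    rw [Nat.choose_eq_zero_of_lt (by omega), Nat.zero_mul]

private lemma pointwise (q i : ℕ) (hq : 6 ≤ q) (hi : q - 2 ≤ i) :
    (i - 1).choose 2 * (i + 2).choose q + (i - 2) * (i + 1).choose q + i.choose q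
      = (q + 2).choose 2 * i.choose (q + 2) + 4 * (q + 1).choose 2 * i.choose (q + 1)
        + q * (3 * q - 4) * i.choose q + 2 * (q - 1) * (q - 3) * i.choose (q - 1)
        + (q - 3).choose 2 * i.choose (q - 2) := by
  obtain ⟨s, rfl⟩ : ∃ s, q = s + 6 := ⟨q - 6, by omega⟩
  simp only [show s + 6 - 1 = s + 5 from rfl, show s + 6 - 2 = s + 4 from rfl,
    show s + 6 - 3 = s + 3 from rfl, show 3 * (s + 6) - 4 = 3 * s + 14 by omega] at hi ⊢
  have hcases : i = s + 4 ∨ i = s + 5 ∨ i = s + 6 ∨ s + 7 ≤ i := by omega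
  rcases hcases with rfl | rfl | rfl | hbig
  · -- i = q - 2
    rw [show s + 4 - 1 = s + 3 from rfl, show s + 4 - 2 = s + 2 from rfl,
      Nat.choose_self, Nat.choose_self,
      show (s + 5).choose (s + 6) = 0 from Nat.choose_eq_zero_of_lt (by omega),
      show (s + 4).choose (s + 6) = 0 from Nat.choose_eq_zero_of_lt (by omega),
      show (s + 4).choose (s + 8) = 0 from Nat.choose_eq_zero_of_lt (by omega),
      show (s + 4).choose (s + 7) = 0 from Nat.choose_eq_zero_of_lt (by omega),
      show (s + 4).choose (s + 5) = 0 from Nat.choose_eq_zero_of_lt (by omega)]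
    ring
  · -- i = q - 1
    rw [show s + 5 - 1 = s + 4 from rfl, show s + 5 - 2 = s + 3 from rfl,
      Nat.choose_self, Nat.choose_self,
      show (s + 7).choose (s + 6) = s + 7 from Nat.choose_succ_self_right _,
      show (s + 5).choose (s + 4) = s + 5 from Nat.choose_succ_self_right _,
      show (s + 5).choose (s + 6) = 0 from Nat.choose_eq_zero_of_lt (by omega),
      show (s + 5).choose (s + 8) = 0 from Nat.choose_eq_zero_of_lt (by omega),
      show (s + 5).choose (s + 7) = 0 from Nat.choose_eq_zero_of_lt (by omega)]
    refine Nat.eq_of_mul_eq_mul_right (show 0 < 2 by norm_num) ?_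
    have h1 := choose_two_eq (s + 4) (s + 3) rfl
    have h2 := choose_two_eq (s + 3) (s + 2) rfl
    zify at h1 h2 ⊢
    linear_combination ((s : ℤ) + 7) * h1 - ((s : ℤ) + 5) * h2
  · -- i = q
    rw [show s + 6 - 1 = s + 5 from rfl, show s + 6 - 2 = s + 4 from rfl,
      Nat.choose_self,
      show (s + 8).choose (s + 6) = (s + 8).choose 2 from by
        rw [show s + 6 = s + 8 - 2 from rfl]; exact Nat.choose_symm (by omega),
      show (s + 6).choose (s + 4) = (s + 6).choose 2 from by
        rw [show s + 4 = s + 6 - 2 from rfl]; exact Nat.choose_symm (by omega),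
      show (s + 7).choose (s + 6) = s + 7 from Nat.choose_succ_self_right _,
      show (s + 6).choose (s + 5) = s + 6 from Nat.choose_succ_self_right _,
      show (s + 6).choose (s + 8) = 0 from Nat.choose_eq_zero_of_lt (by omega),
      show (s + 6).choose (s + 7) = 0 from Nat.choose_eq_zero_of_lt (by omega)]
    refine Nat.eq_of_mul_eq_mul_right (show 0 < 4 by norm_num) ?_
    have h1 := choose_two_eq (s + 5) (s + 4) rfl
    have h2 := choose_two_eq (s + 8) (s + 7) rfl
    have h3 := choose_two_eq (s + 3) (s + 2) rfl
    have h4 := choose_two_eq (s + 6) (s + 5) rfl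
    zify at h1 h2 h3 h4 ⊢
    linear_combination (2 * (((s + 8).choose 2 : ℕ) : ℤ)) * h1
      + ((s : ℤ) + 5) * ((s : ℤ) + 4) * h2
      - (2 * (((s + 6).choose 2 : ℕ) : ℤ)) * h3 - ((s : ℤ) + 3) * ((s : ℤ) + 2) * h4
  · -- i ≥ q + 1
    obtain ⟨k, rfl⟩ : ∃ k, i = s + 7 + k := ⟨i - (s + 7), by omega⟩
    set B0 := (s + 7 + k).choose (s + 4) with hB0
    set B1 := (s + 7 + k).choose (s + 5) with hB1
    set B2 := (s + 7 + k).choose (s + 6) with hB2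
    set B3 := (s + 7 + k).choose (s + 7) with hB3
    set B4 := (s + 7 + k).choose (s + 8) with hB4
    have hP1 : (s + 7 + k + 1).choose (s + 6) = B1 + B2 := Nat.choose_succ_succ _ _
    have hP1' : (s + 7 + k + 1).choose (s + 5) = B0 + B1 := Nat.choose_succ_succ _ _
    have hP2 : (s + 7 + k + 2).choose (s + 6) = B0 + 2 * B1 + B2 := by
      rw [show s + 7 + k + 2 = (s + 7 + k + 1) + 1 by omega, Nat.choose_succ_succ, hP1, hP1']
      ring
    have he1 : B1 * (s + 5) = B0 * (k + 3) := by
      have := Nat.choose_succ_right_eq (s + 7 + k) (s + 4)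
      rwa [show s + 7 + k - (s + 4) = k + 3 by omega] at this
    have he2 : B2 * (s + 6) = B1 * (k + 2) := by
      have := Nat.choose_succ_right_eq (s + 7 + k) (s + 5)
      rwa [show s + 7 + k - (s + 5) = k + 2 by omega] at this
    have he3 : B3 * (s + 7) = B2 * (k + 1) := by
      have := Nat.choose_succ_right_eq (s + 7 + k) (s + 6)
      rwa [show s + 7 + k - (s + 6) = k + 1 by omega] at this
    have he4 : B4 * (s + 8) = B3 * k := by
      have := Nat.choose_succ_right_eq (s + 7 + k) (s + 7)
      rwa [show s + 7 + k - (s + 7) = k by omega] at this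
    rw [show s + 7 + k - 1 = s + 6 + k by omega, show s + 7 + k - 2 = s + 5 + k by omega,
      show s + 7 + k + 2 = s + 7 + k + 2 from rfl, hP2, hP1]
    refine Nat.eq_of_mul_eq_mul_right (show 0 < 2 by norm_num) ?_
    have hc1 := choose_two_eq (s + 6 + k) (s + 5 + k) (by omega)
    have hc2 := choose_two_eq (s + 8) (s + 7) rfl
    have hc3 := choose_two_eq (s + 7) (s + 6) rfl
    have hc4 := choose_two_eq (s + 3) (s + 2) rfl
    zify at hc1 hc2 hc3 hc4 he1 he2 he3 he4 ⊢
    linear_combination ((B0 : ℤ) + 2 * B1 + B2) * hc1 - (B4 : ℤ) * hc2 - 4 * (B3 : ℤ) * hc3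
      - (B0 : ℤ) * hc4 - ((k : ℤ) + 2 * s + 8) * he1 - (2 * (k : ℤ) + 5 * s + 25) * he2
      - ((k : ℤ) + 4 * s + 24) * he3 - ((s : ℤ) + 7) * he4

/-- The computation of `β_q(J_{n−2})` in the proof of Theorem 3.6 for `q ≥ 6`:
`∑_{i=q−2}^{n} [C(i−1, 2)·C(i+2, q) + (i−2)·C(i+1, q) + C(i, q)]·C(n, i)`
equals
`C(q+2, 2)·C(n, q+2)·2^(n−q−2) + 4·C(q+1, 2)·C(n, q+1)·2^(n−q−1)
 + q(3q−4)·C(n, q)·2^(n−q) + 2(q−1)(q−3)·C(n, q−1)·2^(n−q+1)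
 + C(q−3, 2)·C(n, q−2)·2^(n−q+2)`. -/
theorem betti_J_n_sub_two (n q : ℕ) (hq : 6 ≤ q) (hn : 3 ≤ n) :
    ∑ i ∈ Finset.Icc (q - 2) n,
        ((i - 1).choose 2 * (i + 2).choose q + (i - 2) * (i + 1).choose q + i.choose q)
          * n.choose i
      = (q + 2).choose 2 * n.choose (q + 2) * 2 ^ (n - (q + 2))
          + 4 * (q + 1).choose 2 * n.choose (q + 1) * 2 ^ (n - (q + 1))
          + q * (3 * q - 4) * n.choose q * 2 ^ (n - q)
          + 2 * (q - 1) * (q - 3) * n.choose (q - 1) * 2 ^ (n + 1 - q)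
          + (q - 3).choose 2 * n.choose (q - 2) * 2 ^ (n + 2 - q) := by
  have step1 : ∑ i ∈ Finset.Icc (q - 2) n,
      ((i - 1).choose 2 * (i + 2).choose q + (i - 2) * (i + 1).choose q + i.choose q)
        * n.choose i
      = ∑ i ∈ Finset.Icc (q - 2) n,
        ((q + 2).choose 2 * (i.choose (q + 2) * n.choose i)
          + 4 * (q + 1).choose 2 * (i.choose (q + 1) * n.choose i)
          + q * (3 * q - 4) * (i.choose q * n.choose i)
          + 2 * (q - 1) * (q - 3) * (i.choose (q - 1) * n.choose i)
          + (q - 3).choose 2 * (i.choose (q - 2) * n.choose i)) := by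
    refine Finset.sum_congr rfl fun i hi => ?_
    simp only [Finset.mem_Icc] at hi
    rw [pointwise q i hq hi.1]
    ring
  rw [step1, Finset.sum_add_distrib, Finset.sum_add_distrib, Finset.sum_add_distrib,
    Finset.sum_add_distrib, ← Finset.mul_sum, ← Finset.mul_sum, ← Finset.mul_sum,
    ← Finset.mul_sum, ← Finset.mul_sum,
    key_sum n (q + 2) (q - 2) (by omega), key_sum n (q + 1) (q - 2) (by omega),
    key_sum n q (q - 2) (by omega), key_sum n (q - 1) (q - 2) (by omega),
    key_sum n (q - 2) (q - 2) (by omega),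
    show n - (q - 1) = n + 1 - q by omega, show n - (q - 2) = n + 2 - q by omega]
  ring
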